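/- Let g be a word of length 2p (p ∈ {2,3}) and define vertices u_i by alternately applying s and t as in the structure of a 2-residue; if h is the alternating word of length 2pq then h = g^q, and u_0 = u_{2pq} if and only if a * g^q = a for every a in the image of u_0. -/

import Mathlib

/-- The generating set `T_n`: pairs `(a,b)` with `0 ≤ a < b ≤ n`. -/
def TGen (n : ℕ) := {p : ℕ × ℕ // p.1 < p.2 ∧ p.2 ≤ n}

namespace TGen

/-- The generator `t(a,b)`. -/
def t {n : ℕ} (a b : ℕ) (h : a < b ∧ b ≤ n) : TGen n := ⟨(a, b), h⟩

/-- The basic relator words defining `Q_n`. -/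
def base (n : ℕ) : Set (List (TGen n)) :=
  {w | ∃ a b c d : ℕ, ∃ h : a < b ∧ b ≤ c ∧ c < d ∧ d ≤ n,
      w = [t a b ⟨h.1, by omega⟩, t c d ⟨h.2.2.1, h.2.2.2⟩,
           t a b ⟨h.1, by omega⟩, t c d ⟨h.2.2.1, h.2.2.2⟩]} ∪
  {w | ∃ a b x y : ℕ, ∃ h : a < a + x + y ∧ a + x + y < b ∧ b ≤ n,
      w = [t a b ⟨by omega, h.2.2⟩, t (a + x) (b - y) ⟨by omega, by omega⟩,
           t a b ⟨by omega, h.2.2⟩, t (a + y) (b - x) ⟨by omega, by omega⟩]} ∪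
  {w | ∃ a b x y z : ℕ, ∃ h : 0 < x ∧ 0 < y ∧ 0 < z ∧ b = a + x + y + z ∧ b ≤ n,
      w = [t a (b - z) ⟨by omega, by omega⟩, t (a + y) b ⟨by omega, h.2.2.2.2⟩,
           t a (b - x) ⟨by omega, by omega⟩, t (a + z) b ⟨by omega, h.2.2.2.2⟩,
           t a (b - y) ⟨by omega, by omega⟩, t (a + x) b ⟨by omega, h.2.2.2.2⟩]}

/-- `Q_n`: the closure of the basic relator words under cyclic permutations. -/
def Qset (n : ℕ) : Set (List (TGen n)) :=
  {w | ∃ u v : List (TGen n), w = v ++ u ∧ u ++ v ∈ base n}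

open Classical in
/-- The action `*` of the paper: `a * a = a`, and for `a ≠ b`, `a * b` is the (unique) `c` such
that some word in `a b c F_{T_n}` lies in `Q_n`. -/
noncomputable def star {n : ℕ} (a b : TGen n) : TGen n :=
  if a = b then a
  else if h : ∃ c : TGen n, ∃ rest : List (TGen n), (a :: b :: c :: rest) ∈ Qset n then
    h.choose
  else a

/-- The action of a word: `a * (b₁ ⋯ b_m) = (⋯((a * b₁) * b₂)⋯) * b_m`. -/
noncomputable def starW {n : ℕ} (a : TGen n) (l : List (TGen n)) : TGen n :=
  l.foldl star a

/-- The `▽`-action of a single colour: `[u ▽ s](s) = u(s)` and `[u ▽ s](r) = u(r) * u(s)`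
for `r ≠ s`. -/
noncomputable def nabla {n : ℕ} {I : Type*} [DecidableEq I]
    (u : I → TGen n) (s : I) : I → TGen n :=
  fun r => if r = s then u s else star (u r) (u s)

/-- The sequence `u_0, u_1, u_2, …` with `u_{2i+1} ▽ s = u_{2i} = u_{2i-1} ▽ t`, i.e.
obtained from `u₀` by alternately applying `▽s` and `▽t`. -/
noncomputable def seq {n : ℕ} {I : Type*} [DecidableEq I]
    (u₀ : I → TGen n) (s t : I) : ℕ → (I → TGen n)
  | 0 => u₀
  | k + 1 => nabla (seq u₀ s t k) (if Even k then s else t)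

/-- The alternating word `h = u₀(s) u₁(t) u₂(s) u₃(t) ⋯ u_{2k-2}(s) u_{2k-1}(t)`. -/
noncomputable def hword {n : ℕ} {I : Type*} [DecidableEq I]
    (u₀ : I → TGen n) (s t : I) (k : ℕ) : List (TGen n) :=
  (List.range (2 * k)).map fun j => seq u₀ s t j (if Even j then s else t)

end TGen

-- auxiliary lemmas, to be inserted after `end TGen`
theorem gidx {α : Type*} (l : List α) {i i' : ℕ} (e : i = i') (h : i < l.length) :
    l[i]'h = l[i']'(e ▸ h) := by subst e; rfl

namespace TGen

set_option maxHeartbeats 4000000 in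
lemma qset_cases {n : ℕ} {w : List (TGen n)} (hw : w ∈ Qset n) :
    (∃ a b c d : ℕ, ∃ _h : a < b ∧ b ≤ c ∧ c < d ∧ d ≤ n,
      w = [t a b (by omega), t c d (by omega), t a b (by omega), t c d (by omega)]) ∨
    (∃ a b c d : ℕ, ∃ _h : a < b ∧ b ≤ c ∧ c < d ∧ d ≤ n,
      w = [t c d (by omega), t a b (by omega), t c d (by omega), t a b (by omega)]) ∨
    (∃ a b x y : ℕ, ∃ _h : a < a + x + y ∧ a + x + y < b ∧ b ≤ n,
      w = [t a b (by omega), t (a + x) (b - y) (by omega),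
           t a b (by omega), t (a + y) (b - x) (by omega)]) ∨
    (∃ a b x y : ℕ, ∃ _h : a < a + x + y ∧ a + x + y < b ∧ b ≤ n,
      w = [t (a + x) (b - y) (by omega), t a b (by omega),
           t (a + y) (b - x) (by omega), t a b (by omega)]) ∨
    (∃ a b x y z : ℕ, ∃ _h : 0 < x ∧ 0 < y ∧ 0 < z ∧ b = a + x + y + z ∧ b ≤ n,
      w = [t a (b - z) (by omega), t (a + y) b (by omega), t a (b - x) (by omega),
           t (a + z) b (by omega), t a (b - y) (by omega), t (a + x) b (by omega)]) ∨
    (∃ a b x y z : ℕ, ∃ _h : 0 < x ∧ 0 < y ∧ 0 < z ∧ b = a + x + y + z ∧ b ≤ n,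
      w = [t (a + y) b (by omega), t a (b - x) (by omega), t (a + z) b (by omega),
           t a (b - y) (by omega), t (a + x) b (by omega), t a (b - z) (by omega)]) := by
  obtain ⟨u, v, rfl, hb⟩ := hw
  simp only [base, Set.mem_union, Set.mem_setOf_eq] at hb
  rcases hb with (⟨a, b, c, d, h, he⟩ | ⟨a, b, x, y, h, he⟩) | ⟨a, b, x, y, z, h, he⟩
  · rcases u with _ | ⟨e0, u⟩
    · simp only [List.nil_append] at he; subst he
      exact Or.inl ⟨a, b, c, d, h, rfl⟩
    · rcases u with _ | ⟨e1, u⟩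
      · simp only [List.cons_append, List.nil_append, List.cons.injEq] at he
        obtain ⟨rfl, rfl⟩ := he
        exact Or.inr (Or.inl ⟨a, b, c, d, h, rfl⟩)
      · rcases u with _ | ⟨e2, u⟩
        · simp only [List.cons_append, List.nil_append, List.cons.injEq] at he
          obtain ⟨rfl, rfl, rfl⟩ := he
          exact Or.inl ⟨a, b, c, d, h, rfl⟩
        · rcases u with _ | ⟨e3, u⟩
          · simp only [List.cons_append, List.nil_append, List.cons.injEq] at he
            obtain ⟨rfl, rfl, rfl, rfl⟩ := he
            exact Or.inr (Or.inl ⟨a, b, c, d, h, rfl⟩)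
          · simp only [List.cons_append, List.cons.injEq, List.append_eq_nil_iff] at he
            obtain ⟨rfl, rfl, rfl, rfl, rfl, rfl⟩ := he
            exact Or.inl ⟨a, b, c, d, h, rfl⟩
  · rcases u with _ | ⟨e0, u⟩
    · simp only [List.nil_append] at he; subst he
      exact Or.inr (Or.inr (Or.inl ⟨a, b, x, y, h, rfl⟩))
    · rcases u with _ | ⟨e1, u⟩
      · simp only [List.cons_append, List.nil_append, List.cons.injEq] at he
        obtain ⟨rfl, rfl⟩ := he
        exact Or.inr (Or.inr (Or.inr (Or.inl ⟨a, b, x, y, h, rfl⟩)))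
      · rcases u with _ | ⟨e2, u⟩
        · simp only [List.cons_append, List.nil_append, List.cons.injEq] at he
          obtain ⟨rfl, rfl, rfl⟩ := he
          exact Or.inr (Or.inr (Or.inl ⟨a, b, y, x, by omega, rfl⟩))
        · rcases u with _ | ⟨e3, u⟩
          · simp only [List.cons_append, List.nil_append, List.cons.injEq] at he
            obtain ⟨rfl, rfl, rfl, rfl⟩ := he
            exact Or.inr (Or.inr (Or.inr (Or.inl ⟨a, b, y, x, by omega, rfl⟩)))
          · simp only [List.cons_append, List.cons.injEq, List.append_eq_nil_iff] at he
            obtain ⟨rfl, rfl, rfl, rfl, rfl, rfl⟩ := he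
            exact Or.inr (Or.inr (Or.inl ⟨a, b, x, y, h, rfl⟩))
  · rcases u with _ | ⟨e0, u⟩
    · simp only [List.nil_append] at he; subst he
      exact Or.inr (Or.inr (Or.inr (Or.inr (Or.inl ⟨a, b, x, y, z, h, rfl⟩))))
    · rcases u with _ | ⟨e1, u⟩
      · simp only [List.cons_append, List.nil_append, List.cons.injEq] at he
        obtain ⟨rfl, rfl⟩ := he
        exact Or.inr (Or.inr (Or.inr (Or.inr (Or.inr ⟨a, b, x, y, z, h, rfl⟩))))
      · rcases u with _ | ⟨e2, u⟩
        · simp only [List.cons_append, List.nil_append, List.cons.injEq] at he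
          obtain ⟨rfl, rfl, rfl⟩ := he
          exact Or.inr (Or.inr (Or.inr (Or.inr (Or.inl ⟨a, b, y, z, x, by omega, rfl⟩))))
        · rcases u with _ | ⟨e3, u⟩
          · simp only [List.cons_append, List.nil_append, List.cons.injEq] at he
            obtain ⟨rfl, rfl, rfl, rfl⟩ := he
            exact Or.inr (Or.inr (Or.inr (Or.inr (Or.inr ⟨a, b, y, z, x, by omega, rfl⟩))))
          · rcases u with _ | ⟨e4, u⟩
            · simp only [List.cons_append, List.nil_append, List.cons.injEq] at he
              obtain ⟨rfl, rfl, rfl, rfl, rfl⟩ := he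
              exact Or.inr (Or.inr (Or.inr (Or.inr (Or.inl ⟨a, b, z, x, y, by omega, rfl⟩))))
            · rcases u with _ | ⟨e5, u⟩
              · simp only [List.cons_append, List.nil_append, List.cons.injEq] at he
                obtain ⟨rfl, rfl, rfl, rfl, rfl, rfl⟩ := he
                exact Or.inr (Or.inr (Or.inr (Or.inr (Or.inr ⟨a, b, z, x, y, by omega, rfl⟩))))
              · simp only [List.cons_append, List.cons.injEq, List.append_eq_nil_iff] at he
                obtain ⟨rfl, rfl, rfl, rfl, rfl, rfl, rfl, rfl⟩ := he
                exact Or.inr (Or.inr (Or.inr (Or.inr (Or.inl ⟨a, b, x, y, z, h, rfl⟩))))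

end TGen

namespace TGen
theorem mk_inj {n a b a' b' : ℕ} {h : a < b ∧ b ≤ n} {h' : a' < b' ∧ b' ≤ n} :
    (⟨(a, b), h⟩ : TGen n) = ⟨(a', b'), h'⟩ ↔ a = a' ∧ b = b' := by
  constructor
  · intro q
    have := Subtype.ext_iff.mp q
    exact ⟨congrArg Prod.fst this, congrArg Prod.snd this⟩
  · rintro ⟨rfl, rfl⟩; rfl


end TGen

namespace TGen
set_option maxHeartbeats 4000000 in
theorem third_unique {n : ℕ} {w w' : List (TGen n)} (hw : w ∈ Qset n) (hw' : w' ∈ Qset n)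
    {a b c c' : TGen n} {r r' : List (TGen n)}
    (e : w = a :: b :: c :: r) (e' : w' = a :: b :: c' :: r') : c = c' := by
  subst e e'
  rcases qset_cases hw with ⟨a1,b1,c1,d1,h1,he⟩|⟨a1,b1,c1,d1,h1,he⟩|⟨a1,b1,x1,y1,h1,he⟩|
    ⟨a1,b1,x1,y1,h1,he⟩|⟨a1,b1,x1,y1,z1,h1,he⟩|⟨a1,b1,x1,y1,z1,h1,he⟩ <;>
  rcases qset_cases hw' with ⟨a2,b2,c2,d2,h2,he'⟩|⟨a2,b2,c2,d2,h2,he'⟩|⟨a2,b2,x2,y2,h2,he'⟩|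
    ⟨a2,b2,x2,y2,h2,he'⟩|⟨a2,b2,x2,y2,z2,h2,he'⟩|⟨a2,b2,x2,y2,z2,h2,he'⟩ <;>
  · simp only [List.cons.injEq] at he he'
    obtain ⟨ha1, hb1, rfl, -⟩ := he
    obtain ⟨ha2, hb2, rfl, -⟩ := he'
    have e1 := ha1.symm.trans ha2
    have e2 := hb1.symm.trans hb2
    replace e1 := Subtype.ext_iff.mp e1
    replace e2 := Subtype.ext_iff.mp e2
    refine Subtype.ext ?_
    simp only [t, Prod.mk.injEq] at e1 e2 ⊢
    omega
end TGen

namespace TGen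

lemma head_ne {n : ℕ} {w : List (TGen n)} (hw : w ∈ Qset n) {a b : TGen n}
    {r : List (TGen n)} (e : w = a :: b :: r) : a ≠ b := by
  subst e
  rcases qset_cases hw with ⟨a1,b1,c1,d1,h1,he⟩|⟨a1,b1,c1,d1,h1,he⟩|⟨a1,b1,x1,y1,h1,he⟩|
    ⟨a1,b1,x1,y1,h1,he⟩|⟨a1,b1,x1,y1,z1,h1,he⟩|⟨a1,b1,x1,y1,z1,h1,he⟩ <;>
  · simp only [List.cons.injEq] at he
    obtain ⟨rfl, rfl, -⟩ := he
    intro hq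
    replace hq := Subtype.ext_iff.mp hq
    simp only [t, Prod.mk.injEq] at hq
    omega

lemma star_self {n : ℕ} (a : TGen n) : star a a = a := by
  rw [star, if_pos rfl]

lemma star_eq {n : ℕ} {w : List (TGen n)} {a b c : TGen n} {r : List (TGen n)}
    (hw : w ∈ Qset n) (he : w = a :: b :: c :: r) : star a b = c := by
  subst he
  have hne : a ≠ b := head_ne hw rfl
  have hex : ∃ c' : TGen n, ∃ rest : List (TGen n), (a :: b :: c' :: rest) ∈ Qset n := ⟨c, r, hw⟩
  rw [star, if_neg hne, dif_pos hex]
  obtain ⟨rest, hmem⟩ := hex.choose_spec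
  exact third_unique hmem hw rfl rfl

lemma rotate_one_mem {n : ℕ} {w : List (TGen n)} (hw : w ∈ Qset n) :
    w.rotate 1 ∈ Qset n := by
  obtain ⟨u, v, rfl, hb⟩ := hw
  cases v with
  | nil =>
    cases u with
    | nil => exact ⟨[], [], by simp, by simpa using hb⟩
    | cons x u₀ =>
      refine ⟨[x], u₀, ?_, ?_⟩
      · show ((x :: u₀).rotate 1 : List (TGen n)) = u₀ ++ [x]
        simpa using List.rotate_cons_succ u₀ x 0
      · show ([x] ++ u₀ : List (TGen n)) ∈ base n
        simpa using hb
  | cons x v₀ =>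
    refine ⟨u ++ [x], v₀, ?_, ?_⟩
    · show ((x :: (v₀ ++ u)).rotate 1 : List (TGen n)) = v₀ ++ (u ++ [x])
      have := List.rotate_cons_succ (v₀ ++ u) x 0
      simpa [List.append_assoc] using this
    · show ((u ++ [x]) ++ v₀ : List (TGen n)) ∈ base n
      simpa [List.append_assoc] using hb

lemma rotate_mem {n : ℕ} {w : List (TGen n)} (hw : w ∈ Qset n) (k : ℕ) :
    w.rotate k ∈ Qset n := by
  induction k with
  | zero => simpa using hw
  | succ k ih =>
    have := rotate_one_mem ih
    rwa [List.rotate_rotate] at this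

lemma star_eq_getElem {n : ℕ} {w : List (TGen n)} (hw : w ∈ Qset n) (h3 : 3 ≤ w.length) :
    star (w[0]'(by omega)) (w[1]'(by omega)) = w[2]'(by omega) := by
  rcases w with _ | ⟨x0, w⟩; · simp at h3
  rcases w with _ | ⟨x1, w⟩; · simp at h3
  rcases w with _ | ⟨x2, w⟩; · simp at h3
  simpa using star_eq hw rfl

lemma cyc {n : ℕ} {g : List (TGen n)} (hg : g ∈ Qset n) (h3 : 3 ≤ g.length)
    (hL : 0 < g.length) (j : ℕ) :
    star (g[j % g.length]'(Nat.mod_lt _ hL)) (g[(j + 1) % g.length]'(Nat.mod_lt _ hL))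
      = g[(j + 2) % g.length]'(Nat.mod_lt _ hL) := by
  have hw := rotate_mem hg j
  have h3' : 3 ≤ (g.rotate j).length := by simpa using h3
  have key := star_eq_getElem hw h3'
  rw [List.getElem_rotate, List.getElem_rotate, List.getElem_rotate] at key
  rw [gidx g (show j % g.length = (0 + j) % g.length by rw [Nat.zero_add]),
      gidx g (show (j + 1) % g.length = (1 + j) % g.length by rw [Nat.add_comm]),
      gidx g (show (j + 2) % g.length = (2 + j) % g.length by rw [Nat.add_comm])]
  exact key

lemma nabla_eq {n : ℕ} {I : Type*} [DecidableEq I] (u : I → TGen n) (c r : I) :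
    nabla u c r = star (u r) (u c) := by
  unfold nabla
  by_cases h : r = c
  · rw [if_pos h, h, star_self]
  · rw [if_neg h]

/-- The letters of the alternating word. -/
noncomputable def Aw {n : ℕ} {I : Type*} [DecidableEq I] (u₀ : I → TGen n) (s t : I)
    (j : ℕ) : TGen n :=
  seq u₀ s t j (if Even j then s else t)

lemma hword_eq_map {n : ℕ} {I : Type*} [DecidableEq I] (u₀ : I → TGen n) (s t : I) (k : ℕ) :
    hword u₀ s t k = (List.range (2 * k)).map (Aw u₀ s t) := rfl

lemma seq_apply {n : ℕ} {I : Type*} [DecidableEq I] (u₀ : I → TGen n) (s t : I)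
    (m : ℕ) (r : I) :
    seq u₀ s t m r = starW (u₀ r) ((List.range m).map (Aw u₀ s t)) := by
  induction m with
  | zero => simp [seq, starW]
  | succ m ih =>
    have h1 : seq u₀ s t (m + 1) r = star (seq u₀ s t m r) (Aw u₀ s t m) := by
      rw [seq, nabla_eq]; rfl
    rw [h1, ih, starW, starW, List.range_succ, List.map_append, List.foldl_append]
    simp

lemma Aw_rec {n : ℕ} {I : Type*} [DecidableEq I] (u₀ : I → TGen n) (s t : I)
    (j : ℕ) : Aw u₀ s t (j + 2) = star (Aw u₀ s t j) (Aw u₀ s t (j + 1)) := by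
  rcases Nat.even_or_odd j with hj | hj
  · have h1 : ¬ Even (j + 1) := by rw [Nat.even_iff] at *; omega
    have h2 : Even (j + 2) := by rw [Nat.even_iff] at *; omega
    rw [Aw, if_pos h2, seq, if_neg h1, nabla_eq]
    congr 1
    · rw [seq, if_pos hj, nabla_eq, Aw, if_pos hj, star_self]
    · rw [Aw, if_neg h1]
  · have hj' : ¬ Even j := by rw [Nat.even_iff, Nat.odd_iff] at *; omega
    have h1 : Even (j + 1) := by rw [Nat.even_iff, Nat.odd_iff] at *; omega
    have h2 : ¬ Even (j + 2) := by rw [Nat.even_iff, Nat.odd_iff] at *; omega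
    rw [Aw, if_neg h2, seq, if_pos h1, nabla_eq]
    congr 1
    · rw [seq, if_neg hj', nabla_eq, Aw, if_neg hj', star_self]
    · rw [Aw, if_pos h1]

end TGen

theorem flat_rep_len {α : Type*} (g : List α) (q : ℕ) :
    ((List.replicate q g).flatten).length = q * g.length := by
  induction q with
  | zero => simp
  | succ q ih => rw [List.replicate_succ, List.flatten_cons, List.length_append, ih]; ring

theorem flat_rep {α : Type*} (g : List α) (hL : 0 < g.length) :
    ∀ (q j : ℕ) (h : j < ((List.replicate q g).flatten).length),
      ((List.replicate q g).flatten)[j] = g[j % g.length]'(Nat.mod_lt _ hL)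
  | 0, j, h => by simp at h
  | q + 1, j, h => by
    have hflat : ((List.replicate (q + 1) g).flatten : List α)
        = g ++ (List.replicate q g).flatten := by
      rw [List.replicate_succ, List.flatten_cons]
    have hj' : j < (g ++ (List.replicate q g).flatten).length := hflat ▸ h
    rw [List.getElem_of_eq hflat h, List.getElem_append]
    split
    · next h' => exact gidx g (Nat.mod_eq_of_lt h').symm h'
    · next h' =>
      have hLj : g.length ≤ j := by omega
      rw [flat_rep g hL q (j - g.length) (by simp only [List.length_append] at hj'; omega)]
      exact gidx g (Nat.mod_eq_sub_mod hLj).symm _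



/-- Lemma tr46: if `g` is the element of `u₀(s)u₁(t)F_{T_n} ∩ Q_n`, of length `2p`, and
`k = pq`, then the alternating word `h` of length `2k` equals `g^q`, the vertex `u_{2k}`
satisfies `u_{2k}(r) = u₀(r) * g^q` for all `r`, and `u₀ = u_{2k}` iff `a * g^q = a` for all
`a` in the image of `u₀`. -/
theorem stmt_18 {n : ℕ} {I : Type*} [DecidableEq I]
    (u₀ : I → TGen n) (hu : Function.Injective u₀) (s t : I) (hst : s ≠ t)
    (p : ℕ) (hp : p = 2 ∨ p = 3) (g : List (TGen n))
    (hgQ : g ∈ TGen.Qset n) (hglen : g.length = 2 * p)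
    (hghead : ∃ rest : List (TGen n), g = u₀ s :: (TGen.seq u₀ s t 1) t :: rest)
    (q : ℕ) :
    TGen.hword u₀ s t (p * q) = (List.replicate q g).flatten ∧
    (∀ r : I, TGen.seq u₀ s t (2 * (p * q)) r =
      TGen.starW (u₀ r) ((List.replicate q g).flatten)) ∧
    (TGen.seq u₀ s t (2 * (p * q)) = u₀ ↔
      ∀ a ∈ Set.range u₀, TGen.starW a ((List.replicate q g).flatten) = a) := by
  have hL : 0 < g.length := by omega
  have h3 : 3 ≤ g.length := by omega
  obtain ⟨rest, hg⟩ := hghead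
  have hg0 : g[0]'(by omega) = u₀ s := by
    rw [List.getElem_of_eq hg]; rfl
  have hg1 : g[1]'(by omega) = TGen.seq u₀ s t 1 t := by
    rw [List.getElem_of_eq hg]; rfl
  have key : ∀ j, TGen.Aw u₀ s t j = g[j % g.length]'(Nat.mod_lt _ hL) := by
    intro j
    induction j using Nat.strong_induction_on with
    | _ j ih =>
      rcases j with _ | j
      · rw [gidx g (Nat.zero_mod g.length), hg0]
        simp [TGen.Aw, TGen.seq]
      · rcases j with _ | j
        · rw [gidx g (Nat.mod_eq_of_lt (show 1 < g.length by omega)), hg1]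
          have h1 : ¬ Even 1 := by decide
          rw [TGen.Aw, if_neg h1]
        · rw [TGen.Aw_rec u₀ s t j, ih j (by omega), ih (j + 1) (by omega)]
          exact TGen.cyc hgQ h3 hL j
  have hword_eq : TGen.hword u₀ s t (p * q) = (List.replicate q g).flatten := by
    rw [TGen.hword_eq_map]
    apply List.ext_getElem
    · rw [List.length_map, List.length_range, flat_rep_len, hglen]; ring
    · intro i h1 h2
      rw [List.getElem_map, List.getElem_range, key i, flat_rep g hL q i h2]
  have claim2 : ∀ r : I, TGen.seq u₀ s t (2 * (p * q)) r =
      TGen.starW (u₀ r) ((List.replicate q g).flatten) := by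
    intro r
    rw [TGen.seq_apply u₀ s t (2 * (p * q)) r,
        show (List.range (2 * (p * q))).map (TGen.Aw u₀ s t) = TGen.hword u₀ s t (p * q) from rfl,
        hword_eq]
  refine ⟨hword_eq, claim2, ?_, ?_⟩
  · intro he a ha
    obtain ⟨r, rfl⟩ := ha
    rw [← claim2 r, he]
  · intro ha
    funext r
    rw [claim2 r, ha (u₀ r) ⟨r, rfl⟩]
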